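/- Let v = 5m be odd and a_i, b_i ∈ {-1,1} satisfy PSD_A(s)+PSD_B(s) = 2v-2 for s = 1,...,v-1 and = 4v-2 at s = 0. With A_j = Σ_{i=0}^{m-1} a_{5i+j} and B_j = Σ_{i=0}^{m-1} b_{5i+j} for j = 0,...,4, one has Σ_{0≤k<l<5} (A_k A_l + B_k B_l) = 4m, and Σ_{l-k∈{2,3}} (A_k A_l + B_k B_l) = Σ_{l-k∈{1,4}} (A_k A_l + B_k B_l). -/

import Mathlib

noncomputable def PSD (v : ℕ) (x : ℕ → ℝ) (k : ℕ) : ℝ :=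
  ‖∑ α ∈ Finset.range v, (x α : ℂ)
    * Complex.exp (2 * (Real.pi : ℂ) * Complex.I * α * k / v)‖ ^ 2

open Complex Real

noncomputable def w : ℂ := Complex.exp (2 * (Real.pi:ℂ) * Complex.I / 5)

lemma w5 : w ^ 5 = 1 := by
  rw [w, ← Complex.exp_nat_mul]
  have : ((5:ℕ):ℂ) * (2 * (Real.pi:ℂ) * Complex.I / 5) = 2 * (Real.pi:ℂ) * Complex.I := by
    push_cast; ring
  rw [this, Complex.exp_two_pi_mul_I]

lemma cos_two_pi_div_five : Real.cos (2 * Real.pi / 5) = (Real.sqrt 5 - 1) / 4 := by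
  have h : (2:ℝ) * Real.pi / 5 = 2 * (Real.pi / 5) := by ring
  rw [h, Real.cos_two_mul, Real.cos_pi_div_five]
  have h5 : Real.sqrt 5 ^ 2 = 5 := Real.sq_sqrt (by norm_num)
  nlinarith [h5]

lemma cos_four_pi_div_five : Real.cos (4 * Real.pi / 5) = -(1 + Real.sqrt 5) / 4 := by
  have h : (4:ℝ) * Real.pi / 5 = Real.pi - Real.pi / 5 := by ring
  rw [h, Real.cos_pi_sub, Real.cos_pi_div_five]; ring

lemma w_re : w = Complex.exp ((2 * Real.pi / 5 : ℝ) * Complex.I) := by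
  rw [w]; congr 1; push_cast; ring

lemma w14 : w + w ^ 4 = ((Real.sqrt 5 - 1) / 2 : ℝ) := by
  have hconj : (starRingEnd ℂ) w = w ^ 4 := by
    have h1 : (starRingEnd ℂ) w = w⁻¹ := by
      rw [w, ← Complex.exp_conj, ← Complex.exp_neg]
      congr 1
      simp only [map_div₀, map_mul, Complex.conj_I, Complex.conj_ofReal, map_ofNat]
      ring
    rw [h1]
    have hne : w ≠ 0 := by rw [w]; exact Complex.exp_ne_zero _
    field_simp
    exact w5.symm
  rw [← hconj, Complex.add_conj, w_re, Complex.exp_ofReal_mul_I_re, cos_two_pi_div_five]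
  push_cast; ring

lemma w23 : w ^ 2 + w ^ 3 = (-(1 + Real.sqrt 5) / 2 : ℝ) := by
  have hw2 : w ^ 2 = Complex.exp ((4 * Real.pi / 5 : ℝ) * Complex.I) := by
    rw [w, ← Complex.exp_nat_mul]
    congr 1; push_cast; ring
  have hconj : (starRingEnd ℂ) (w ^ 2) = w ^ 3 := by
    have h1 : (starRingEnd ℂ) (w^2) = (w^2)⁻¹ := by
      rw [hw2, ← Complex.exp_conj, ← Complex.exp_neg]
      congr 1
      simp only [map_mul, Complex.conj_I, Complex.conj_ofReal]
      ring
    rw [h1]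
    have hne : w ≠ 0 := by rw [w]; exact Complex.exp_ne_zero _
    field_simp
    exact w5.symm
  rw [← hconj, Complex.add_conj, hw2, Complex.exp_ofReal_mul_I_re, cos_four_pi_div_five]
  push_cast; ring

lemma conj_w : (starRingEnd ℂ) w = w ^ 4 := by
  have h1 : (starRingEnd ℂ) w = w⁻¹ := by
    rw [w, ← Complex.exp_conj, ← Complex.exp_neg]
    congr 1
    simp only [map_div₀, map_mul, Complex.conj_I, Complex.conj_ofReal, map_ofNat]
    ring
  rw [h1]
  have hne : w ≠ 0 := by rw [w]; exact Complex.exp_ne_zero _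
  field_simp
  exact w5.symm


lemma key5 (X : ℕ → ℝ) :
    ‖∑ j ∈ Finset.range 5, (X j : ℂ) * w ^ j‖ ^ 2
    = (∑ j ∈ Finset.range 5, (X j)^2)
      + (Real.sqrt 5 - 1)/2 * (X 0*X 1 + X 1*X 2 + X 2*X 3 + X 3*X 4 + X 0*X 4)
      + (-(1 + Real.sqrt 5))/2 * (X 0*X 2 + X 1*X 3 + X 2*X 4 + X 0*X 3 + X 1*X 4) := by
  have hne : w ≠ 0 := by rw [w]; exact Complex.exp_ne_zero _
  set z := ∑ j ∈ Finset.range 5, (X j : ℂ) * w ^ j with hz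
  have hconjz : (starRingEnd ℂ) z = (X 0 : ℂ) + (X 1:ℂ) * w^4 + (X 2:ℂ)*w^3 + (X 3:ℂ)*w^2 + (X 4:ℂ)*w := by
    rw [hz]
    simp only [Finset.sum_range_succ, Finset.sum_range_zero, map_add, map_mul, map_zero,
      Complex.conj_ofReal, map_pow, conj_w]
    have h8 : (w^4)^2 = w^3 := by
      have : (w^4)^2 = w^3 * w^5 := by ring
      rw [this, w5, mul_one]
    have h12 : (w^4)^3 = w^2 := by
      have : (w^4)^3 = w^2 * (w^5)^2 := by ring
      rw [this, w5]; ring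
    have h16 : (w^4)^4 = w := by
      have : (w^4)^4 = w * (w^5)^3 := by ring
      rw [this, w5]; ring
    rw [h8, h12, h16]; ring
  have hzz : z * (starRingEnd ℂ) z
      = ((∑ j ∈ Finset.range 5, (X j)^2 : ℝ) : ℂ)
        + ((X 0*X 1 + X 1*X 2 + X 2*X 3 + X 3*X 4 + X 0*X 4 : ℝ):ℂ) * (w + w^4)
        + ((X 0*X 2 + X 1*X 3 + X 2*X 4 + X 0*X 3 + X 1*X 4 : ℝ):ℂ) * (w^2 + w^3) := by
    rw [hconjz, hz]
    simp only [Finset.sum_range_succ, Finset.sum_range_zero]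
    push_cast
    linear_combination (((X 1:ℂ)^2+(X 2:ℂ)^2+(X 3:ℂ)^2+(X 4:ℂ)^2)
      + ((X 2:ℂ)*(X 1:ℂ)+(X 3:ℂ)*(X 2:ℂ)+(X 4:ℂ)*(X 3:ℂ)) * w
      + ((X 3:ℂ)*(X 1:ℂ)+(X 4:ℂ)*(X 2:ℂ)) * w^2
      + (X 4:ℂ)*(X 1:ℂ) * w^3) * w5
  rw [Complex.sq_norm, ← Complex.ofReal_inj, ← Complex.mul_conj, hzz, w14, w23]
  push_cast
  ring

lemma PSD_zero (v : ℕ) (x : ℕ → ℝ) : PSD v x 0 = (∑ α ∈ Finset.range v, x α)^2 := by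
  unfold PSD
  simp only [Nat.cast_zero, mul_zero, zero_div, Complex.exp_zero, mul_one]
  rw [← Complex.ofReal_sum, Complex.norm_real, Real.norm_eq_abs, _root_.sq_abs]

lemma sum_range_five_mul' {M : Type*} [AddCommMonoid M] (f : ℕ → M) (m : ℕ) :
    ∑ α ∈ Finset.range (5*m), f α
      = ∑ j ∈ Finset.range 5, ∑ i ∈ Finset.range m, f (5*i+j) := by
  rw [← Finset.sum_product']
  apply Finset.sum_nbij' (fun α => (α % 5, α / 5)) (fun p => 5 * p.2 + p.1)
  · intro a ha; simp only [Finset.mem_product, Finset.mem_range] at *; omega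
  · intro p hp; simp only [Finset.mem_product, Finset.mem_range] at *; omega
  · intro a ha
    have : 5 * (a / 5) + a % 5 = a := by omega
    exact this
  · intro p hp; simp only [Finset.mem_product, Finset.mem_range] at hp
    exact Prod.ext (by simp only; omega) (by simp only; omega)
  · intro a ha; congr 1; omega

lemma PSD_m (m : ℕ) (hm : 0 < m) (x : ℕ → ℝ) :
    PSD (5*m) x m
      = ‖∑ j ∈ Finset.range 5,
          ((∑ i ∈ Finset.range m, x (5*i+j) : ℝ):ℂ) * w ^ j‖ ^ 2 := by
  unfold PSD
  congr 2
  have hmc : (m:ℂ) ≠ 0 := by exact_mod_cast hm.ne'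
  have hexp : ∀ α : ℕ, Complex.exp (2 * (Real.pi:ℂ) * Complex.I * α * m / (5*m:ℕ)) = w ^ α := by
    intro α
    have harg : 2 * (Real.pi:ℂ) * Complex.I * α * m / ((5*m:ℕ):ℂ)
        = (α:ℕ) * (2 * (Real.pi:ℂ) * Complex.I / 5) := by
      push_cast
      field_simp
    rw [harg, Complex.exp_nat_mul, w]
  have : ∀ α : ℕ, (x α : ℂ) * Complex.exp (2 * (Real.pi:ℂ) * Complex.I * α * m / (5*m:ℕ))
      = (x α : ℂ) * w ^ α := by intro α; rw [hexp]
  rw [Finset.sum_congr rfl (fun α _ => this α), sum_range_five_mul' (fun α => (x α : ℂ) * w ^ α) m]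
  apply Finset.sum_congr rfl
  intro j hj
  rw [Complex.ofReal_sum, Finset.sum_mul]
  apply Finset.sum_congr rfl
  intro i hi
  have : w ^ (5*i+j) = w ^ j := by
    rw [pow_add, pow_mul, w5, one_pow, one_mul]
  rw [this]

lemma PSD_m' (m : ℕ) (hm : 0 < m) (x : ℕ → ℝ) (X : ℕ → ℝ)
    (hX : ∀ j, X j = ∑ i ∈ Finset.range m, x (5*i+j)) :
    PSD (5*m) x m
    = (∑ j ∈ Finset.range 5, (X j)^2)
      + (Real.sqrt 5 - 1)/2 * (X 0*X 1 + X 1*X 2 + X 2*X 3 + X 3*X 4 + X 0*X 4)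
      + (-(1 + Real.sqrt 5))/2 * (X 0*X 2 + X 1*X 3 + X 2*X 4 + X 0*X 3 + X 1*X 4) := by
  rw [PSD_m m hm x]
  have : ∑ j ∈ Finset.range 5, ((∑ i ∈ Finset.range m, x (5*i+j) : ℝ):ℂ) * w ^ j
      = ∑ j ∈ Finset.range 5, (X j : ℂ) * w ^ j :=
    Finset.sum_congr rfl (fun j _ => by rw [hX j])
  rw [this, key5]

lemma exists_int (m : ℕ) (x : ℕ → ℝ) (hx : ∀ i, x i = -1 ∨ x i = 1) (j : ℕ) :
    ∃ n : ℤ, (∑ i ∈ Finset.range m, x (5*i+j)) = (n:ℝ) := by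
  induction m with
  | zero => exact ⟨0, by simp⟩
  | succ k ih =>
    obtain ⟨n, hn⟩ := ih
    rcases hx (5*k+j) with h | h
    · exact ⟨n - 1, by rw [Finset.sum_range_succ, hn, h]; push_cast; ring⟩
    · exact ⟨n + 1, by rw [Finset.sum_range_succ, hn, h]; push_cast; ring⟩

lemma filt23 (A B : ℕ → ℝ) :
    (∑ p ∈ (Finset.range 5 ×ˢ Finset.range 5).filter
          (fun p => p.1 < p.2 ∧ (p.2 - p.1 = 2 ∨ p.2 - p.1 = 3)),
          (A p.1 * A p.2 + B p.1 * B p.2))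
    = (A 0*A 2 + B 0*B 2) + (A 0*A 3 + B 0*B 3) + (A 1*A 3 + B 1*B 3)
      + (A 1*A 4 + B 1*B 4) + (A 2*A 4 + B 2*B 4) := by
  rw [show ((Finset.range 5 ×ˢ Finset.range 5).filter
          (fun p => p.1 < p.2 ∧ (p.2 - p.1 = 2 ∨ p.2 - p.1 = 3)))
    = {(0,2),(0,3),(1,3),(1,4),(2,4)} from by decide]
  simp [Finset.sum_insert, Finset.mem_insert]
  ring

lemma filt14 (A B : ℕ → ℝ) :
    (∑ p ∈ (Finset.range 5 ×ˢ Finset.range 5).filter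
          (fun p => p.1 < p.2 ∧ (p.2 - p.1 = 1 ∨ p.2 - p.1 = 4)),
          (A p.1 * A p.2 + B p.1 * B p.2))
    = (A 0*A 1 + B 0*B 1) + (A 0*A 4 + B 0*B 4) + (A 1*A 2 + B 1*B 2)
      + (A 2*A 3 + B 2*B 3) + (A 3*A 4 + B 3*B 4) := by
  rw [show ((Finset.range 5 ×ˢ Finset.range 5).filter
          (fun p => p.1 < p.2 ∧ (p.2 - p.1 = 1 ∨ p.2 - p.1 = 4)))
    = {(0,1),(0,4),(1,2),(2,3),(3,4)} from by decide]
  simp [Finset.sum_insert, Finset.mem_insert]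
  ring

/-- The two constraints for `v = 5m`. -/
theorem stmt12 (v m : ℕ) (hv : Odd v) (hv0 : 0 < v) (hdm : v = 5 * m)
    (a b : ℕ → ℝ)
    (ha : ∀ i, a i = -1 ∨ a i = 1) (hb : ∀ i, b i = -1 ∨ b i = 1)
    (hpsd : ∀ s : ℕ, 1 ≤ s → s ≤ v - 1 → PSD v a s + PSD v b s = 2 * v - 2)
    (hpsd0 : PSD v a 0 + PSD v b 0 = 4 * v - 2)
    (A B : ℕ → ℝ)
    (hA : ∀ j, A j = ∑ i ∈ Finset.range m, a (5 * i + j))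
    (hB : ∀ j, B j = ∑ i ∈ Finset.range m, b (5 * i + j)) :
    (∑ l ∈ Finset.range 5, ∑ k ∈ Finset.range l, (A k * A l + B k * B l)) = 4 * m
    ∧ (∑ p ∈ (Finset.range 5 ×ˢ Finset.range 5).filter
          (fun p => p.1 < p.2 ∧ (p.2 - p.1 = 2 ∨ p.2 - p.1 = 3)),
          (A p.1 * A p.2 + B p.1 * B p.2))
      = ∑ p ∈ (Finset.range 5 ×ˢ Finset.range 5).filter
          (fun p => p.1 < p.2 ∧ (p.2 - p.1 = 1 ∨ p.2 - p.1 = 4)),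
          (A p.1 * A p.2 + B p.1 * B p.2) := by
  subst hdm
  have hm : 0 < m := by omega
  have hA' : ∀ j, A j = ∑ i ∈ Finset.range m, a (5 * i + j) := hA
  -- equation at s = 0
  rw [PSD_zero, PSD_zero, sum_range_five_mul', sum_range_five_mul'] at hpsd0
  simp only [Finset.sum_range_succ, Finset.sum_range_zero, zero_add] at hpsd0
  rw [← hA 0, ← hA 1, ← hA 2, ← hA 3, ← hA 4,
      ← hB 0, ← hB 1, ← hB 2, ← hB 3, ← hB 4] at hpsd0
  -- equation at s = m
  have hs := hpsd m (by omega) (by omega)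
  rw [PSD_m' m hm a A hA, PSD_m' m hm b B hB] at hs
  simp only [Finset.sum_range_succ, Finset.sum_range_zero, zero_add] at hs
  -- integer witnesses
  obtain ⟨a0, g0⟩ : ∃ n : ℤ, A 0 = n := (hA 0) ▸ exists_int m a ha 0
  obtain ⟨a1, g1⟩ : ∃ n : ℤ, A 1 = n := (hA 1) ▸ exists_int m a ha 1
  obtain ⟨a2, g2⟩ : ∃ n : ℤ, A 2 = n := (hA 2) ▸ exists_int m a ha 2
  obtain ⟨a3, g3⟩ : ∃ n : ℤ, A 3 = n := (hA 3) ▸ exists_int m a ha 3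
  obtain ⟨a4, g4⟩ : ∃ n : ℤ, A 4 = n := (hA 4) ▸ exists_int m a ha 4
  obtain ⟨b0, k0⟩ : ∃ n : ℤ, B 0 = n := (hB 0) ▸ exists_int m b hb 0
  obtain ⟨b1, k1⟩ : ∃ n : ℤ, B 1 = n := (hB 1) ▸ exists_int m b hb 1
  obtain ⟨b2, k2⟩ : ∃ n : ℤ, B 2 = n := (hB 2) ▸ exists_int m b hb 2
  obtain ⟨b3, k3⟩ : ∃ n : ℤ, B 3 = n := (hB 3) ▸ exists_int m b hb 3
  obtain ⟨b4, k4⟩ : ∃ n : ℤ, B 4 = n := (hB 4) ▸ exists_int m b hb 4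
  rw [g0, g1, g2, g3, g4, k0, k1, k2, k3, k4] at hpsd0 hs
  push_cast at hpsd0 hs
  -- the two pair-sums as integers
  set p1 : ℤ := a0*a1 + a1*a2 + a2*a3 + a3*a4 + a0*a4
      + (b0*b1 + b1*b2 + b2*b3 + b3*b4 + b0*b4) with hp1
  set p2 : ℤ := a0*a2 + a1*a3 + a2*a4 + a0*a3 + a1*a4
      + (b0*b2 + b1*b3 + b2*b4 + b0*b3 + b1*b4) with hp2
  set q : ℤ := a0^2+a1^2+a2^2+a3^2+a4^2+b0^2+b1^2+b2^2+b3^2+b4^2 with hq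
  have hsqrt : Real.sqrt 5 * ((p1 : ℝ) - (p2 : ℝ))
      = 20*(m:ℝ) - 4 - 2*(q:ℝ) + (p1:ℝ) + (p2:ℝ) := by
    push_cast [hp1, hp2, hq]
    linear_combination (2:ℝ) * hs
  have hirr : Irrational (Real.sqrt 5) := (Nat.prime_five).irrational_sqrt
  have hpp : p1 = p2 := by
    by_contra hne
    have hd' : ((p1:ℝ) - (p2:ℝ)) ≠ 0 := sub_ne_zero.mpr (by exact_mod_cast hne)
    have key : Real.sqrt 5
        = (((20*(m:ℤ) - 4 - 2*q + p1 + p2 : ℤ) : ℚ) / ((p1 - p2 : ℤ) : ℚ) : ℚ) := by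
      push_cast
      rw [eq_div_iff hd']
      linear_combination hsqrt
    rw [key] at hirr
    exact Rat.not_irrational _ hirr
  -- now both conclusions
  have hE1 : (q:ℝ) + 2*((p1:ℝ) + (p2:ℝ)) = 20*(m:ℝ) - 2 := by
    push_cast [hp1, hp2, hq]
    linear_combination hpsd0
  have hE2 : (q:ℝ) - (p1:ℝ) = 10*(m:ℝ) - 2 := by
    have h2 : (p1:ℝ) = (p2:ℝ) := by exact_mod_cast hpp
    have hz : Real.sqrt 5 * ((p1:ℝ) - (p2:ℝ)) = 0 := by rw [h2]; ring
    linarith [hsqrt, hz, h2]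
  have hS : (p1:ℝ) + (p2:ℝ) = 4*(m:ℝ) := by
    have h2 : (p2:ℝ) = (p1:ℝ) := by exact_mod_cast congrArg (fun z : ℤ => (z:ℝ)) hpp.symm
    linarith
  constructor
  · simp only [Finset.sum_range_succ, Finset.sum_range_zero, zero_add]
    rw [g0, g1, g2, g3, g4, k0, k1, k2, k3, k4]
    push_cast [hp1, hp2] at hS ⊢
    linarith
  · rw [filt23, filt14, g0, g1, g2, g3, g4, k0, k1, k2, k3, k4]
    have h2 : ((p2:ℝ)) = ((p1:ℝ)) := by exact_mod_cast hpp.symm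
    push_cast [hp1, hp2] at h2 ⊢
    linarith
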